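/- arXiv:0910.2137 — 2 statements merged into one kernel-verified Lean document; each statement's English description precedes it below -/
import Mathlib

section
/- Let v(t) be a negative convex function on ℝ₋ᵏ (k > 1) that is increasing in each variable t_i. Then liminf_{t→−∞} v(t)/(t₁+⋯+t_k) equals the minimum over i of liminf_{t_i→−∞} v(t)/t_i. -/
open Filter Topology MeasureTheory

noncomputable section

/-- `ℂⁿ`. -/
abbrev Cn (n : ℕ) := Fin n → ℂ

/-- Plurisubharmonicity on a set: upper semicontinuity together with the
sub-mean value inequality over circles lying in complex lines inside the set. -/
def PSHOn {n : ℕ} (u : Cn n → ℝ) (D : Set (Cn n)) : Prop :=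
  UpperSemicontinuousOn u D ∧
    ∀ z w : Cn n, ∀ r : ℝ, 0 < r →
      (∀ ζ : ℂ, ‖ζ‖ ≤ r → z + ζ • w ∈ D) →
      u z ≤ (2 * Real.pi)⁻¹ *
        ∫ θ in (0:ℝ)..2 * Real.pi, u (z + ((r : ℂ) * Complex.exp (θ * Complex.I)) • w)

/-- Maximality on an open set: `u` dominates every plurisubharmonic competitor on
relatively compact subdomains, given boundary comparison. -/
def MaximalOn {n : ℕ} (u : Cn n → ℝ) (Ω : Set (Cn n)) : Prop :=
  ∀ G : Set (Cn n), IsOpen G → IsCompact (closure G) → closure G ⊆ Ω →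
    ∀ v : Cn n → ℝ, PSHOn v G →
      (∀ p ∈ frontier G, limsup v (𝓝[G] p) ≤ u p) →
      ∀ z ∈ G, v z ≤ u z

/-- The relative type `σ(u,φ) = liminf_{z→x} u(z)/φ(z)`. -/
def relType {n : ℕ} (x : Cn n) (u φ : Cn n → ℝ) : ℝ :=
  liminf (fun z => u z / φ z) (𝓝[≠] x)

/-- Boundedness near `x` (off `x`). -/
def BddNear {n : ℕ} (x : Cn n) (f : Cn n → ℝ) : Prop :=
  ∃ U ∈ 𝓝 x, ∃ C : ℝ, ∀ z ∈ U, z ≠ x → |f z| ≤ C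

/-- `u ≤ v + O(1)` near `x`. -/
def LeO1 {n : ℕ} (x : Cn n) (u v : Cn n → ℝ) : Prop :=
  ∃ U ∈ 𝓝 x, ∃ C : ℝ, ∀ z ∈ U, z ≠ x → u z ≤ v z + C

/-- `u = v + O(1)` near `x`. -/
def EqO1 {n : ℕ} (x : Cn n) (u v : Cn n → ℝ) : Prop :=
  LeO1 x u v ∧ LeO1 x v u

/-- A weight at `x`: plurisubharmonic near `x` and singular at `x`. -/
def IsWeight {n : ℕ} (x : Cn n) (φ : Cn n → ℝ) : Prop :=
  ∃ U ∈ 𝓝 x, PSHOn φ (U \ {x}) ∧ Tendsto φ (𝓝[≠] x) atBot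

/-- A maximal weight at `x`. -/
def IsMaxWeight {n : ℕ} (x : Cn n) (φ : Cn n → ℝ) : Prop :=
  ∃ U ∈ 𝓝 x, PSHOn φ (U \ {x}) ∧ MaximalOn φ (U \ {x}) ∧ Tendsto φ (𝓝[≠] x) atBot

/-- Local boundedness on a set. -/
def LocBddOn {n : ℕ} (u : Cn n → ℝ) (S : Set (Cn n)) : Prop :=
  ∀ z ∈ S, ∃ U ∈ 𝓝 z, ∃ C : ℝ, ∀ w ∈ U ∩ S, |u w| ≤ C

/-- Analytic singularity: `φ = c·log|F| + O(1)` with `F` holomorphic having an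
isolated zero at `x`. -/
def HasAnalyticSing {n : ℕ} (x : Cn n) (φ : Cn n → ℝ) : Prop :=
  ∃ c : ℝ, 0 < c ∧ ∃ (N : ℕ) (F : Cn n → Fin N → ℂ), ∃ U ∈ 𝓝 x,
    DifferentiableOn ℂ F U ∧ F x = 0 ∧ (∀ z ∈ U, z ≠ x → F z ≠ 0) ∧
    BddNear x (fun z => φ z - c * Real.log ‖F z‖)

/-- Asymptotically analytic singularity: approximation by analytic weights in the
sense `(1+ε)ψ_ε + O(1) ≤ ψ ≤ (1−ε)ψ_ε + O(1)`. -/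
def AsympAnalytic {n : ℕ} (x : Cn n) (ψ : Cn n → ℝ) : Prop :=
  ∀ ε : ℝ, 0 < ε → ∃ φ : Cn n → ℝ, IsWeight x φ ∧ HasAnalyticSing x φ ∧
    LeO1 x (fun z => (1 + ε) * φ z) ψ ∧ LeO1 x ψ (fun z => (1 - ε) * φ z)

/-- A bounded hyperconvex domain. -/
def Hyperconvex {n : ℕ} (D : Set (Cn n)) : Prop :=
  IsOpen D ∧ Bornology.IsBounded D ∧ D.Nonempty ∧
    ∃ ρ : Cn n → ℝ, PSHOn ρ D ∧ ContinuousOn ρ D ∧ (∀ z ∈ D, ρ z < 0) ∧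
      ∀ c : ℝ, c < 0 → IsCompact (closure {z ∈ D | ρ z ≤ c}) ∧
        closure {z ∈ D | ρ z ≤ c} ⊆ D

/-- Zero boundary values. -/
def ZeroOnBoundary {n : ℕ} (D : Set (Cn n)) (u : Cn n → ℝ) : Prop :=
  ∀ p ∈ frontier D, Tendsto u (𝓝[D] p) (𝓝 0)

/-- The Green–Zahariuta function of `D` with singularity `φ` at `x`. -/
def Green {n : ℕ} (D : Set (Cn n)) (x : Cn n) (φ : Cn n → ℝ) (z : Cn n) : ℝ :=
  sSup {t : ℝ | ∃ v : Cn n → ℝ, PSHOn v D ∧ (∀ w ∈ D, v w ≤ 0) ∧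
    1 ≤ relType x v φ ∧ t = v z}

/-- The complete greenification of `ψ` at `x` in `D`. -/
def greenification {n : ℕ} (D : Set (Cn n)) (x : Cn n) (ψ : Cn n → ℝ) (z : Cn n) : ℝ :=
  limsup (fun y => sSup {t : ℝ | ∃ v : Cn n → ℝ, PSHOn v D ∧ (∀ w ∈ D, v w ≤ 0) ∧
    LeO1 x v ψ ∧ t = v y}) (𝓝 z)

/-- Demailly's approximation `𝔇_k u`. -/
def Demailly {n : ℕ} (D : Set (Cn n)) (k : ℕ) (u : Cn n → ℝ) (z : Cn n) : ℝ :=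
  (k : ℝ)⁻¹ * sSup {t : ℝ | ∃ f : Cn n → ℂ, DifferentiableOn ℂ f D ∧
    (∫⁻ w in D, ENNReal.ofReal (‖f w‖ ^ 2 * Real.exp (-2 * k * u w))) < 1 ∧
    t = Real.log ‖f z‖}

/-- An abstract complex Monge–Ampère operator with the standard properties used in the
paper: characterization of maximality, the comparison principle, and continuity of the
residual masses along monotone sequences. -/
structure MAData (n : ℕ) where
  ma : (Cn n → ℝ) → Measure (Cn n)
  max_iff : ∀ (u : Cn n → ℝ) (Ω : Set (Cn n)), IsOpen Ω → PSHOn u Ω →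
      (MaximalOn u Ω ↔ ma u Ω = 0)
  comparison : ∀ (D : Set (Cn n)) (u v : Cn n → ℝ), IsOpen D →
      Bornology.IsBounded D → PSHOn u D → PSHOn v D →
      closure {z ∈ D | u z < v z} ⊆ D →
      ma v {z ∈ D | u z < v z} ≤ ma u {z ∈ D | u z < v z}
  cont_dec : ∀ (D : Set (Cn n)) (x : Cn n) (u : ℕ → Cn n → ℝ) (v : Cn n → ℝ),
      IsOpen D → x ∈ D → (∀ j, PSHOn (u j) (D \ {x})) → PSHOn v (D \ {x}) →
      (∀ j z, u (j + 1) z ≤ u j z) →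
      (∀ z ∈ D \ {x}, Tendsto (fun j => u j z) atTop (𝓝 (v z))) →
      Tendsto (fun j => ma (u j) {x}) atTop (𝓝 (ma v {x}))
  cont_inc : ∀ (D : Set (Cn n)) (x : Cn n) (u : ℕ → Cn n → ℝ) (v : Cn n → ℝ),
      IsOpen D → x ∈ D → (∀ j, PSHOn (u j) (D \ {x})) → PSHOn v (D \ {x}) →
      (∀ j z, u j z ≤ u (j + 1) z) →
      (∀ z ∈ D \ {x}, limsup (fun y => ⨆ j, u j y) (𝓝 z) = v z) →
      Tendsto (fun j => ma (u j) {x}) atTop (𝓝 (ma v {x}))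


private lemma div_nn {a b : ℝ} (ha : a ≤ 0) (hb : b ≤ 0) : 0 ≤ a / b := by
  rw [← neg_div_neg_eq]
  exact div_nonneg (by linarith) (by linarith)

private lemma pi_atBot_eq (k : ℕ) :
    (Filter.pi fun _ : Fin k => (atBot : Filter ℝ)) = (atBot : Filter (Fin k → ℝ)) := by
  apply le_antisymm
  · refine (atBot_basis.ge_iff).2 fun a _ => ?_
    have h : Set.Iic a = ⋂ i, (fun t : Fin k → ℝ => t i) ⁻¹' Set.Iic (a i) := by
      ext t; simp [Pi.le_def]
    rw [h]
    exact Filter.iInter_mem.2 fun i => Filter.mem_pi_of_mem i (Iic_mem_atBot (a i))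
  · rw [Filter.le_pi]
    intro i
    rw [tendsto_atBot]
    intro b
    rw [eventually_atBot]
    exact ⟨fun _ => b, fun t ht => ht i⟩

set_option maxHeartbeats 1000000 in
/-- for a negative convex function `v` on the negative orthant, increasing in
each variable, `liminf_{t→−∞} v(t)/(t₁+⋯+t_k)` equals the minimum over `i` of
`liminf_{t_i→−∞} v(t)/t_i`. -/
theorem liminf_convex_min (k : ℕ) (hk : 1 < k) (Ω : Set (Fin k → ℝ))
    (hΩ : Ω = {t : Fin k → ℝ | ∀ i, t i < 0})
    (v : (Fin k → ℝ) → ℝ) (hconv : ConvexOn ℝ Ω v) (hneg : ∀ t ∈ Ω, v t < 0)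
    (hmono : ∀ t ∈ Ω, ∀ i : Fin k, ∀ s : ℝ, t i ≤ s → s < 0 →
      v t ≤ v (Function.update t i s)) :
    liminf (fun t => v t / ∑ i, t i)
        ((Filter.pi fun _ : Fin k => (atBot : Filter ℝ)) ⊓ 𝓟 Ω) =
      ⨅ i : Fin k, liminf (fun t => v t / t i)
        ((Filter.comap (fun t => t i) atBot) ⊓ 𝓟 Ω) := by
  have hk0 : 0 < k := by omega
  have hnefin : Nonempty (Fin k) := ⟨⟨0, hk0⟩⟩
  have hk1 : (1 : ℝ) ≤ (k : ℝ) := by exact_mod_cast hk0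
  have hΩ' : ∀ t : Fin k → ℝ, t ∈ Ω → ∀ i, t i < 0 := by
    intro t ht; rw [hΩ] at ht; exact ht
  have hΩ'' : ∀ t : Fin k → ℝ, (∀ i, t i < 0) → t ∈ Ω := by
    intro t ht; rw [hΩ]; exact ht
  -- basic facts
  have hSneg : ∀ t ∈ Ω, (∑ j, t j) < 0 := by
    intro t ht
    have h := Finset.sum_lt_sum_of_nonempty Finset.univ_nonempty
      (f := t) (g := fun _ => (0:ℝ)) (fun j _ => hΩ' t ht j)
    simpa using h
  have hSle : ∀ t ∈ Ω, ∀ i : Fin k, (∑ j, t j) ≤ t i := by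
    intro t ht i
    have h1 : ∑ j ∈ Finset.univ.erase i, t j ≤ 0 :=
      Finset.sum_nonpos fun j _ => (hΩ' t ht j).le
    have h2 : t i + ∑ j ∈ Finset.univ.erase i, t j = ∑ j, t j :=
      Finset.add_sum_erase _ _ (Finset.mem_univ i)
    linarith
  have hsmulmem : ∀ t ∈ Ω, ∀ c : ℝ, 0 < c → c • t ∈ Ω := by
    intro t ht c hc
    refine hΩ'' _ fun i => ?_
    have : c * t i < 0 := mul_neg_of_pos_of_neg hc (hΩ' t ht i)
    simpa using this
  -- scaling lemma
  have hscale : ∀ t ∈ Ω, ∀ δ R : ℝ, 0 < δ → δ < 1 → 1 ≤ R →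
      v t * (R - δ) ≤ (1 - δ) * v (R • t) := by
    intro t ht δ R hδ hδ1 hR
    have hRδ : 0 < R - δ := by linarith
    have hmemR : R • t ∈ Ω := hsmulmem t ht R (by linarith)
    have hmemδ : δ • t ∈ Ω := hsmulmem t ht δ hδ
    have hcomb : ((1-δ)/(R-δ)) • (R • t) + ((R-1)/(R-δ)) • (δ • t) = t := by
      funext j
      simp only [Pi.add_apply, Pi.smul_apply, smul_eq_mul]
      field_simp
      ring
    have h : v (((1-δ)/(R-δ)) • (R • t) + ((R-1)/(R-δ)) • (δ • t)) ≤
        ((1-δ)/(R-δ)) * v (R • t) + ((R-1)/(R-δ)) * v (δ • t) :=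
      hconv.2 hmemR hmemδ
        (div_nonneg (by linarith) hRδ.le) (div_nonneg (by linarith) hRδ.le)
        (by field_simp [hRδ.ne']; ring)
    rw [hcomb] at h
    have hvδ : v (δ • t) < 0 := hneg _ hmemδ
    have h2 := mul_le_mul_of_nonneg_right h hRδ.le
    have he1 : ((1-δ)/(R-δ) * v (R • t) + (R-1)/(R-δ) * v (δ • t)) * (R - δ)
        = (1-δ) * v (R • t) + (R-1) * v (δ • t) := by
      field_simp
    rw [he1] at h2
    nlinarith [mul_nonpos_of_nonneg_of_nonpos (by linarith : (0:ℝ) ≤ R - 1) hvδ.le]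
  -- filter characterizations
  have ev1 : ∀ P : (Fin k → ℝ) → Prop,
      (∀ᶠ t in (Filter.pi fun _ : Fin k => (atBot : Filter ℝ)) ⊓ 𝓟 Ω, P t) ↔
        ∃ N : ℝ, ∀ t ∈ Ω, (∀ j, t j ≤ N) → P t := by
    intro P
    rw [pi_atBot_eq, eventually_inf_principal, eventually_atBot]
    constructor
    · rintro ⟨a, ha⟩
      refine ⟨Finset.univ.inf' Finset.univ_nonempty a, fun t ht hle => ?_⟩
      exact ha t (fun j => (hle j).trans (Finset.inf'_le a (Finset.mem_univ j))) ht
    · rintro ⟨N, hN⟩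
      exact ⟨fun _ => N, fun t ht hmem => hN t hmem fun j => ht j⟩
  have ev2 : ∀ (i : Fin k) (P : (Fin k → ℝ) → Prop),
      (∀ᶠ t in (Filter.comap (fun t => t i) atBot) ⊓ 𝓟 Ω, P t) ↔
        ∃ N : ℝ, ∀ t ∈ Ω, t i ≤ N → P t := by
    intro i P
    rw [eventually_inf_principal, eventually_comap, eventually_atBot]
    constructor
    · rintro ⟨N, hN⟩
      exact ⟨N, fun t ht hti => hN (t i) hti t rfl ht⟩
    · rintro ⟨N, hN⟩
      exact ⟨N, fun b hb t htb ht => hN t ht (by rw [htb]; exact hb)⟩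
  -- the sets
  set S1 : Set ℝ :=
    {a | ∀ᶠ t in (Filter.pi fun _ : Fin k => (atBot : Filter ℝ)) ⊓ 𝓟 Ω,
      a ≤ v t / ∑ j, t j} with hS1def
  set S2 : Fin k → Set ℝ := fun i =>
    {a | ∀ᶠ t in (Filter.comap (fun t => t i) atBot) ⊓ 𝓟 Ω, a ≤ v t / t i} with hS2def
  have h01 : (0:ℝ) ∈ S1 := by
    refine (ev1 _).2 ⟨0, fun t ht _ => ?_⟩
    exact div_nn (hneg t ht).le (hSneg t ht).le
  have h02 : ∀ i, (0:ℝ) ∈ S2 i := by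
    intro i
    refine (ev2 i _).2 ⟨0, fun t ht _ => ?_⟩
    exact div_nn (hneg t ht).le (hΩ' t ht i).le
  -- reference point
  set p : Fin k → ℝ := fun _ => (-1 : ℝ) with hpdef
  have hp : p ∈ Ω := hΩ'' _ fun _ => by norm_num [hpdef]
  have hvp : v p < 0 := hneg p hp
  have hvRp : ∀ R : ℝ, 1 ≤ R → 2 * v p * R - v p ≤ v (R • p) := by
    intro R hR
    have h := hscale p hp (1/2) R (by norm_num) (by norm_num) hR
    linarith
  -- boundedness
  have bdd2 : ∀ i, BddAbove (S2 i) := by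
    intro i
    refine ⟨2 * (-(v p)), fun a ha => ?_⟩
    obtain ⟨N, hN⟩ := (ev2 i _).1 ha
    set R : ℝ := max 1 (-N) with hRdef
    have hR1 : (1:ℝ) ≤ R := le_max_left _ _
    have hRpos : (0:ℝ) < R := by linarith
    have hmem : R • p ∈ Ω := hsmulmem p hp R hRpos
    have hRi : (R • p) i = -R := by simp [hpdef]
    have ha' : a ≤ v (R • p) / (R • p) i := hN (R • p) hmem (by rw [hRi]; linarith [le_max_right 1 (-N)])
    rw [hRi] at ha'
    have hkey : v (R • p) / (-R) ≤ 2 * (-(v p)) := by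
      rw [div_le_iff_of_neg (by linarith : -R < 0)]
      have := hvRp R hR1
      nlinarith
    linarith
  have bdd1 : BddAbove S1 := by
    refine ⟨2 * (-(v p)), fun a ha => ?_⟩
    obtain ⟨N, hN⟩ := (ev1 _).1 ha
    set R : ℝ := max 1 (-N) with hRdef
    have hR1 : (1:ℝ) ≤ R := le_max_left _ _
    have hRpos : (0:ℝ) < R := by linarith
    have hmem : R • p ∈ Ω := hsmulmem p hp R hRpos
    have hScoord : ∀ j, (R • p) j ≤ N := by
      intro j
      have : (R • p) j = -R := by simp [hpdef]
      rw [this]; linarith [le_max_right 1 (-N)]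
    have ha' : a ≤ v (R • p) / ∑ j, (R • p) j := hN (R • p) hmem hScoord
    have hsum : ∑ j, (R • p) j = -(R * (k:ℝ)) := by
      have h : ∀ j : Fin k, (R • p) j = -R := fun j => by simp [hpdef]
      rw [Finset.sum_congr rfl fun j _ => h j, Finset.sum_const, Finset.card_univ,
        Fintype.card_fin, nsmul_eq_mul]
      ring
    rw [hsum] at ha'
    have hkey : v (R • p) / (-(R * (k:ℝ))) ≤ 2 * (-(v p)) := by
      rw [div_le_iff_of_neg (by nlinarith : -(R * (k:ℝ)) < 0)]
      have h1 := hvRp R hR1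
      nlinarith [mul_nonneg (mul_nonneg (by linarith : (0:ℝ) ≤ -(2 * v p))
        (by linarith : (0:ℝ) ≤ R)) (by linarith : (0:ℝ) ≤ (k:ℝ) - 1)]
    linarith
  -- sigma
  set σ : Fin k → ℝ := fun i =>
    liminf (fun t => v t / t i) ((Filter.comap (fun t => t i) atBot) ⊓ 𝓟 Ω) with hσdef
  have hσ_eq : ∀ i, σ i = sSup (S2 i) := fun i => liminf_eq
  have hσnn : ∀ i, 0 ≤ σ i := fun i => by
    rw [hσ_eq i]; exact le_csSup (bdd2 i) (h02 i)
  set m : ℝ := ⨅ i, σ i with hmdef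
  have hm_le : ∀ j, m ≤ σ j := fun j => ciInf_le (Finite.bddBelow_range _) j
  have hmnn : 0 ≤ m := le_ciInf hσnn
  have hliminf1 : liminf (fun t => v t / ∑ j, t j)
      ((Filter.pi fun _ : Fin k => (atBot : Filter ℝ)) ⊓ 𝓟 Ω) = sSup S1 := liminf_eq
  rw [hliminf1]
  show sSup S1 = m
  apply le_antisymm
  · -- sSup S1 ≤ m = ⨅ σ
    refine le_ciInf fun i => ?_
    refine csSup_le ⟨0, h01⟩ fun a ha => ?_
    refine le_of_forall_pos_le_add fun ε' hε' => ?_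
    obtain ⟨N, hN⟩ := (ev1 _).1 ha
    set δ : ℝ := ε' / (2 * (σ i + ε')) with hδdef
    have hσε : 0 < σ i + ε' := by linarith [hσnn i]
    have hδpos : 0 < δ := div_pos hε' (by linarith)
    have hδ1 : δ < 1 := by
      rw [hδdef, div_lt_one (by linarith)]
      nlinarith [hσnn i]
    have hδkey : δ * (σ i + ε') = ε' / 2 := by
      rw [hδdef]; field_simp
    -- find a point with small ratio
    have hex : ∃ t ∈ Ω, v t / t i < σ i + ε' / 2 := by
      by_contra hcon
      push_neg at hcon
      have hmem2 : σ i + ε' / 2 ∈ S2 i :=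
        (ev2 i _).2 ⟨0, fun t ht _ => hcon t ht⟩
      have := le_csSup (bdd2 i) hmem2
      rw [← hσ_eq i] at this
      linarith
    obtain ⟨t, ht, htv⟩ := hex
    set M : ℝ := Finset.univ.sup' Finset.univ_nonempty t with hMdef
    have hM : M < 0 := (Finset.sup'_lt_iff _).2 fun j _ => hΩ' t ht j
    have hMle : ∀ j, t j ≤ M := fun j => Finset.le_sup' t (Finset.mem_univ j)
    set R : ℝ := max 1 (N / M) with hRdef
    have hR1 : (1:ℝ) ≤ R := le_max_left _ _
    have hRpos : (0:ℝ) < R := by linarith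
    have hRt : R • t ∈ Ω := hsmulmem t ht R hRpos
    have hcoords : ∀ j, (R • t) j ≤ N := by
      intro j
      have h1 : R * t j ≤ R * M := mul_le_mul_of_nonneg_left (hMle j) hRpos.le
      have h2 : R * M ≤ N := by
        have h3 : N / M ≤ R := le_max_right _ _
        have h4 := mul_le_mul_of_nonpos_right h3 hM.le
        rw [div_mul_cancel₀ _ hM.ne] at h4
        linarith [h4]
      simpa using h1.trans h2
    have key : a ≤ v (R • t) / ∑ j, (R • t) j := hN (R • t) hRt hcoords
    set s : ℝ := ∑ j, t j with hsdef
    have hs : s < 0 := hSneg t ht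
    have hsum : ∑ j, (R • t) j = R * s := by
      rw [hsdef, Finset.mul_sum]
      exact Finset.sum_congr rfl fun j _ => by simp
    rw [hsum] at key
    have hRs : R * s < 0 := mul_neg_of_pos_of_neg hRpos hs
    -- chain of inequalities
    have hq1 : (σ i + ε' / 2) * s ≤ v t := by
      have h1 : (σ i + ε' / 2) * t i < v t := (div_lt_iff_of_neg (hΩ' t ht i)).1 htv
      have h2 : (σ i + ε' / 2) * s ≤ (σ i + ε' / 2) * t i :=
        mul_le_mul_of_nonneg_left (hSle t ht i) (by linarith [hσnn i])
      linarith
    have hq2 : (σ i + ε' / 2) * s * (R - δ) ≤ (1 - δ) * v (R • t) := by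
      have h1 : (σ i + ε' / 2) * s * (R - δ) ≤ v t * (R - δ) :=
        mul_le_mul_of_nonneg_right hq1 (by linarith)
      linarith [hscale t ht δ R hδpos hδ1 hR1]
    have hq3 : (σ i + ε') * (R * s) * (1 - δ) ≤ (1 - δ) * v (R • t) := by
      have hid : (σ i + ε') * (R * s) * (1 - δ)
          = (σ i + ε' / 2) * s * (R - δ) + δ * (σ i + ε' / 2) * s := by
        linear_combination (-(s * R)) * hδkey
      have hnp : δ * (σ i + ε' / 2) * s ≤ 0 :=
        mul_nonpos_of_nonneg_of_nonpos
          (by nlinarith [hσnn i]) hs.le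
      linarith
    have hq4 : (σ i + ε') * (R * s) ≤ v (R • t) := by
      have h1δ : (0:ℝ) < 1 - δ := by linarith
      have h := hq3
      rw [mul_comm (1 - δ) (v (R • t))] at h
      exact le_of_mul_le_mul_right h h1δ
    have hfin : v (R • t) / (R * s) ≤ σ i + ε' :=
      (div_le_iff_of_neg hRs).2 hq4
    linarith
  · -- m ≤ sSup S1
    refine le_of_forall_pos_le_add fun ε' hε' => ?_
    suffices hmem : m - ε' ∈ S1 by linarith [le_csSup bdd1 hmem]
    by_cases hm : m ≤ ε'
    · refine (ev1 _).2 ⟨0, fun t ht _ => ?_⟩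
      have := div_nn (hneg t ht).le (hSneg t ht).le
      linarith
    · push_neg at hm
      have hNj : ∀ j, ∃ Nj : ℝ, ∀ u ∈ Ω, u j ≤ Nj → m - ε' / 2 ≤ v u / u j := by
        intro j
        have h1 : m - ε' / 2 < σ j := lt_of_lt_of_le (by linarith) (hm_le j)
        rw [hσ_eq j] at h1
        obtain ⟨b, hb, hlt⟩ := exists_lt_of_lt_csSup ⟨0, h02 j⟩ h1
        obtain ⟨N, hN⟩ := (ev2 j _).1 hb
        exact ⟨N, fun u hu huj => hlt.le.trans (hN u hu huj)⟩
      choose Nf hNf using hNj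
      set N0 : ℝ := Finset.univ.inf' Finset.univ_nonempty Nf with hN0def
      set N : ℝ := min (N0 - 1) (min (-2) (-(2 * m * (k:ℝ)) / ε' - 1)) with hNdef
      have hN2 : N ≤ -2 := (min_le_right _ _).trans (min_le_left _ _)
      have hNN0 : N ≤ N0 - 1 := min_le_left _ _
      have hNm : N ≤ -(2 * m * (k:ℝ)) / ε' - 1 :=
        (min_le_right _ _).trans (min_le_right _ _)
      refine (ev1 _).2 ⟨N, fun t ht hle => ?_⟩
      set s : ℝ := ∑ j, t j with hsdef
      have hs : s < 0 := hSneg t ht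
      have hlampos : ∀ j, 0 < t j / s := fun j => div_pos_of_neg_of_neg (hΩ' t ht j) hs
      have hlamle : ∀ j, t j / s ≤ 1 := by
        intro j
        rw [div_le_iff_of_neg hs]
        linarith [hSle t ht j]
      have hlamsum : ∑ j, t j / s = 1 := by
        rw [← Finset.sum_div]; exact div_self hs.ne
      set a : Fin k → ℝ := fun j => (t j + (1 - t j / s)) / (t j / s) with hadef
      set u : Fin k → (Fin k → ℝ) :=
        fun j => Function.update (fun _ => (-1:ℝ)) j (a j) with hudef
      have hnumneg : ∀ j, t j + (1 - t j / s) < 0 := by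
        intro j; have := hlampos j; have := hle j; linarith [hN2]
      have haj_le : ∀ j, a j ≤ t j + 1 := by
        intro j
        have h1 : a j ≤ t j + (1 - t j / s) := by
          simp only [hadef]
          rw [div_le_iff₀ (hlampos j)]
          nlinarith [hnumneg j, hlamle j, hlampos j]
        have := hlampos j
        linarith
      have haneg : ∀ j, a j < 0 := by
        intro j
        have := haj_le j; have := hle j
        linarith [hN2]
      have hu_mem : ∀ j, u j ∈ Ω := by
        intro j
        refine hΩ'' _ fun m' => ?_
        simp only [hudef, Function.update_apply]
        split_ifs with h
        · subst h; exact haneg m'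
        · norm_num
      have hujj : ∀ j, (u j) j = a j := by
        intro j; simp [hudef]
      have hlama : ∀ j, (t j / s) * a j = t j + (1 - t j / s) := by
        intro j
        simp only [hadef]
        rw [mul_comm, div_mul_cancel₀ _ (hlampos j).ne']
      have hdecomp : ∑ j, (t j / s) • u j = t := by
        funext m'
        have h1 : (∑ j, (t j / s) • u j) m' = ∑ j, (t j / s) * (u j m') := by
          simp [Finset.sum_apply]
        rw [h1]
        have h2 : ∀ j, (t j / s) * (u j m')
            = (t j / s) * (-1) + (if m' = j then (t j / s) * (a j) + (t j / s) else 0) := by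
          intro j
          simp only [hudef, Function.update_apply]
          split_ifs with h
          · ring
          · ring
        rw [Finset.sum_congr rfl fun j _ => h2 j, Finset.sum_add_distrib]
        have h3 : ∑ j, (t j / s) * (-1) = -1 := by
          rw [← Finset.sum_mul, hlamsum]; ring
        have h4 : (∑ j, if m' = j then (t j / s) * (a j) + (t j / s) else 0)
            = (t m' / s) * (a m') + (t m' / s) := by
          rw [Finset.sum_ite_eq]
          simp
        rw [h3, h4, hlama m']
        ring
      have hjen := hconv.map_sum_le (t := Finset.univ) (w := fun j => t j / s)
        (p := u) (fun j _ => (hlampos j).le) hlamsum (fun j _ => hu_mem j)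
      rw [hdecomp] at hjen
      have hvu : ∀ j, v (u j) ≤ (m - ε' / 2) * a j := by
        intro j
        have h1 : a j ≤ Nf j := by
          have h2 : N0 ≤ Nf j := Finset.inf'_le _ (Finset.mem_univ j)
          linarith [haj_le j, hle j, hNN0]
        have h2 := hNf j (u j) (hu_mem j) (by rw [hujj j]; exact h1)
        rw [hujj j] at h2
        exact (le_div_iff_of_neg (haneg j)).1 h2
      have hsum_la : ∑ j, (t j / s) * a j = s + ((k:ℝ) - 1) := by
        have h1 : ∀ j, (t j / s) * a j = t j + 1 - t j / s := by
          intro j; rw [hlama j]; ring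
        rw [Finset.sum_congr rfl fun j _ => h1 j, Finset.sum_sub_distrib, hlamsum,
          Finset.sum_add_distrib, Finset.sum_const, Finset.card_univ, Fintype.card_fin,
          nsmul_eq_mul, mul_one, ← hsdef]
        ring
      have hfinal : v t ≤ (m - ε' / 2) * (s + ((k:ℝ) - 1)) := by
        calc v t ≤ ∑ j, (t j / s) • v (u j) := hjen
          _ = ∑ j, (t j / s) * v (u j) := by simp
          _ ≤ ∑ j, (t j / s) * ((m - ε' / 2) * a j) :=
            Finset.sum_le_sum fun j _ =>
              mul_le_mul_of_nonneg_left (hvu j) (hlampos j).le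
          _ = (m - ε' / 2) * ∑ j, (t j / s) * a j := by
            rw [Finset.mul_sum]
            exact Finset.sum_congr rfl fun j _ => by ring
          _ = _ := by rw [hsum_la]
      rw [le_div_iff_of_neg hs]
      have hsN : s ≤ (k:ℝ) * N := by
        rw [hsdef]
        calc ∑ j, t j ≤ ∑ _j : Fin k, N := Finset.sum_le_sum fun j _ => hle j
          _ = (k:ℝ) * N := by
            rw [Finset.sum_const, Finset.card_univ, Fintype.card_fin, nsmul_eq_mul]
      have hsleN : s ≤ N := by nlinarith
      have hsm : 2 * m * (k:ℝ) / ε' + 1 ≤ -s := by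
        have h2 : -(2 * m * (k:ℝ)) / ε' = -(2 * m * (k:ℝ) / ε') := by ring
        linarith [hNm, h2.le, h2.ge, hsleN]
      have hid : (ε' / 2) * (2 * m * (k:ℝ) / ε') = m * (k:ℝ) := by
        field_simp
      have hA : (ε' / 2) * (2 * m * (k:ℝ) / ε' + 1) ≤ (ε' / 2) * (-s) :=
        mul_le_mul_of_nonneg_left hsm (by linarith)
      nlinarith [hfinal, hA, hid, hmnn, hk1, hε',
        mul_nonneg hmnn (by linarith : (0:ℝ) ≤ (k:ℝ) - 1),
        mul_nonneg hε'.le (by linarith : (0:ℝ) ≤ (k:ℝ))]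

end
end

section
/- Let v : ℝ₋ᵏ → ℝ₋ be convex and increasing in each variable, and let A_i = liminf_{t_i→−∞} v(t)/t_i. Then for all t, t* ∈ ℝ₋ᵏ with t_i ≤ t_i* for all i, one has v(t) − v(t*) ≤ Σ_i A_i (t_i − t_i*). -/
open Filter Topology MeasureTheory

noncomputable section

/-- with `A_i = liminf_{t_i→−∞} v(t)/t_i`, a negative convex function `v`
increasing in each variable satisfies `v(t) − v(t*) ≤ Σ_i A_i (t_i − t_i*)` whenever
`t_i ≤ t_i*` for all `i`. -/
theorem convex_slope_bound (k : ℕ) (hk : 0 < k) (Ω : Set (Fin k → ℝ))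
    (hΩ : Ω = {t : Fin k → ℝ | ∀ i, t i < 0})
    (v : (Fin k → ℝ) → ℝ) (hconv : ConvexOn ℝ Ω v) (hneg : ∀ t ∈ Ω, v t < 0)
    (hmono : ∀ t ∈ Ω, ∀ i : Fin k, ∀ s : ℝ, t i ≤ s → s < 0 →
      v t ≤ v (Function.update t i s))
    (A : Fin k → ℝ)
    (hA : ∀ i, A i = liminf (fun t => v t / t i)
        ((Filter.comap (fun t => t i) atBot) ⊓ 𝓟 Ω)) :
    ∀ t ∈ Ω, ∀ tstar ∈ Ω, (∀ i, t i ≤ tstar i) →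
      v t - v tstar ≤ ∑ i, A i * (t i - tstar i) := by
  classical
  intro t ht tstar htstar hle
  -- Key one-coordinate step
  have key : ∀ u : Fin k → ℝ, u ∈ Ω → ∀ i : Fin k, ∀ a : ℝ, a < 0 → a ≤ u i →
      v (Function.update u i a) - v u ≤ A i * (a - u i) := by
    intro u hu i a ha0 hau
    rcases eq_or_lt_of_le hau with heq | hlt
    · rw [heq, Function.update_eq_self]; simp
    · set c : ℝ := u i with hc
      have hc0 : c < 0 := by rw [hΩ] at hu; exact hu i
      set B : ℝ := v (Function.update u i a) with hB
      set U : ℝ := v u with hU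
      set D : ℝ := (B - U) / (a - c) with hD
      have hac : a - c < 0 := by linarith
      have hacne : a - c ≠ 0 := ne_of_lt hac
      -- lower bound on v along the ray, from convexity
      have hray : ∀ s : ℝ, s < a → U + D * (s - c) ≤ v (Function.update u i s) := by
        intro s hs
        have hs0 : s < 0 := lt_trans hs ha0
        set lam : ℝ := (c - a) / (c - s) with hlam
        have hcs : 0 < c - s := by linarith
        have hlam0 : 0 < lam := div_pos (by linarith) hcs
        have hlamval : lam * (c - s) = c - a := div_mul_cancel₀ _ (ne_of_gt hcs)
        have hlam1 : lam ≤ 1 := by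
          rw [hlam, div_le_one hcs]; linarith
        have hmem_s : Function.update u i s ∈ Ω := by
          rw [hΩ]; intro j
          rcases eq_or_ne j i with hj | hj
          · subst hj; simp [hs0]
          · rw [Function.update_of_ne hj]; rw [hΩ] at hu; exact hu j
        have hcomb : lam • Function.update u i s + (1 - lam) • u = Function.update u i a := by
          funext j
          rcases eq_or_ne j i with hj | hj
          · subst hj
            simp only [Pi.add_apply, Pi.smul_apply, smul_eq_mul, Function.update_self]
            rw [hlam]
            field_simp
            ring
          · simp only [Pi.add_apply, Pi.smul_apply, smul_eq_mul,
              Function.update_of_ne hj]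
            ring
        have hcvx := hconv.2 hmem_s hu (le_of_lt hlam0) (by linarith : (0:ℝ) ≤ 1 - lam)
          (by ring : lam + (1 - lam) = 1)
        rw [hcomb] at hcvx
        set X : ℝ := v (Function.update u i s) with hX
        simp only [smul_eq_mul] at hcvx
        -- hcvx : B ≤ lam * X + (1 - lam) * U
        have hineq : B - U ≤ lam * (X - U) := by
          have : lam * X + (1 - lam) * U = lam * (X - U) + U := by ring
          rw [this] at hcvx; linarith
        -- D * (s - c) ≤ X - U
        have hsub : lam * ((X - U) * (s - c)) = (X - U) * (a - c) := by
          have : lam * ((X - U) * (s - c)) = (X - U) * (-(lam * (c - s))) := by ring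
          rw [this, hlamval]; ring
        have hineq2 : lam * ((X - U) * (s - c)) ≤ (B - U) * (s - c) := by
          have hsc : s - c ≤ 0 := by linarith
          have := mul_le_mul_of_nonpos_right hineq hsc
          calc lam * ((X - U) * (s - c)) = lam * (X - U) * (s - c) := by ring
            _ ≤ (B - U) * (s - c) := this
        rw [hsub] at hineq2
        -- goal : U + D * (s - c) ≤ X
        have hDsc : D * (s - c) ≤ X - U := by
          rw [hD, div_mul_eq_mul_div, div_le_iff_of_neg hac]
          calc (X - U) * (a - c) ≤ (B - U) * (s - c) := hineq2
            _ = (B - U) * (s - c) := rfl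
        linarith
      -- A i ≤ D via liminf
      have hAiD : A i ≤ D := by
        rw [hA i, Filter.liminf_eq]
        have hΩev : ∀ᶠ w in (Filter.comap (fun w => w i) atBot) ⊓ 𝓟 Ω, w ∈ Ω :=
          Filter.Eventually.filter_mono inf_le_right
            (Filter.eventually_principal.2 fun w hw => hw)
        apply csSup_le
        · refine ⟨0, ?_⟩
          refine hΩev.mono fun w hw => ?_
          rw [hΩ] at hw
          exact le_of_lt (div_pos_of_neg_of_neg (by rw [hΩ] at *; exact hneg w hw) (hw i))
        · intro b hb
          -- pull back along the ray s ↦ update u i s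
          have hP : Filter.Tendsto (fun s : ℝ => Function.update u i s) atBot
              ((Filter.comap (fun w => w i) atBot) ⊓ 𝓟 Ω) := by
            rw [Filter.tendsto_inf]
            constructor
            · rw [Filter.tendsto_comap_iff]
              have : ((fun w : Fin k → ℝ => w i) ∘ fun s : ℝ => Function.update u i s)
                  = fun s : ℝ => s := by
                funext s; simp
              rw [this]; exact Filter.tendsto_id
            · rw [Filter.tendsto_principal]
              filter_upwards [eventually_lt_atBot (0:ℝ)] with s hs
              rw [hΩ]; intro j
              rcases eq_or_ne j i with hj | hj
              · subst hj; simp [hs]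
              · rw [Function.update_of_ne hj]; rw [hΩ] at hu; exact hu j
          have h1 : ∀ᶠ s in atBot, b ≤ v (Function.update u i s) / s := by
            have := hP.eventually hb
            simpa using this
          have h2 : ∀ᶠ s in atBot,
              v (Function.update u i s) / s ≤ U * s⁻¹ + D * (1 - c * s⁻¹) := by
            filter_upwards [eventually_lt_atBot a, eventually_lt_atBot (0:ℝ)] with s hs hs0
            have hlow := hray s hs
            have hsinv : s⁻¹ ≤ 0 := le_of_lt (inv_neg''.2 hs0)
            have : v (Function.update u i s) / s ≤ (U + D * (s - c)) / s := by
              rw [div_eq_mul_inv, div_eq_mul_inv]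
              exact mul_le_mul_of_nonpos_right hlow hsinv
            refine this.trans (le_of_eq ?_)
            have hsne : s ≠ 0 := ne_of_lt hs0
            field_simp
          have h3 : Filter.Tendsto (fun s : ℝ => U * s⁻¹ + D * (1 - c * s⁻¹)) atBot
              (𝓝 D) := by
            have hinv : Filter.Tendsto (fun s : ℝ => s⁻¹) atBot (𝓝 0) := by
              have h := (tendsto_neg_atBot_atTop (G := ℝ)).inv_tendsto_atTop
              have h2 := h.neg
              simpa [inv_neg] using h2
            have := ((hinv.const_mul U).add
              (((hinv.const_mul c).const_sub 1).const_mul D))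
            simpa using this
          exact ge_of_tendsto h3 ((h1.and h2).mono fun s hs => hs.1.trans hs.2)
      -- conclude
      have : D * (a - c) ≤ A i * (a - c) := mul_le_mul_of_nonpos_right hAiD (le_of_lt hac)
      have hDval : D * (a - c) = B - U := div_mul_cancel₀ _ hacne
      linarith [hDval ▸ this]
  -- Telescoping over coordinates
  have main : ∀ S : Finset (Fin k),
      v (fun j => if j ∈ S then t j else tstar j) - v tstar ≤
        ∑ i ∈ S, A i * (t i - tstar i) := by
    intro S
    induction S using Finset.induction with
    | empty => simp
    | @insert i S hiS ih =>
      set u : Fin k → ℝ := fun j => if j ∈ S then t j else tstar j with hu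
      have huΩ : u ∈ Ω := by
        rw [hΩ]; intro j
        rw [hΩ] at ht htstar
        by_cases hj : j ∈ S <;> simp [hu, hj, ht j, htstar j]
      have hupdate : (fun j => if j ∈ insert i S then t j else tstar j)
          = Function.update u i (t i) := by
        funext j
        rcases eq_or_ne j i with hj | hj
        · subst hj; simp [hu, hiS]
        · rw [Function.update_of_ne hj]
          simp [hu, Finset.mem_insert, hj]
      have hui : u i = tstar i := by simp [hu, hiS]
      have hti0 : t i < 0 := by rw [hΩ] at ht; exact ht i
      have hstep := key u huΩ i (t i) hti0 (by rw [hui]; exact hle i)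
      rw [hui] at hstep
      rw [hupdate, Finset.sum_insert hiS]
      linarith
  have hfin := main Finset.univ
  simp only [Finset.mem_univ, if_true] at hfin
  exact hfin

end
end
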